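/- arXiv:1801.08915 — 3 statements merged into one kernel-verified Lean document; each statement's English description precedes it below -/
import Mathlib

section
/- (1D Autocorrelation Lemma) Let n ≥ 3 and let c_0, ..., c_{n-2} be positive reals satisfying c_j ≥ c_{j-1} for all 1 ≤ j ≤ (n-2)/2 and c_j = c_{n-2-j} for all 0 ≤ j ≤ (n-2)/2. Define q(x) = Σ_{j=0}^{n-2-x} c_j c_{j+x} for 0 ≤ x ≤ n-2. Then q(x) ≥ q(x+1) for all 0 ≤ x ≤ n-3. -/
/-- 1D Autocorrelation Lemma: for positive coefficients `c_0, …, c_{n-2}` that are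
non-decreasing up to the midpoint and symmetric about it, the autocorrelation
`q(x) = ∑_{j=0}^{n-2-x} c_j c_{j+x}` satisfies `q(x) ≥ q(x+1)`. -/
theorem stmt_5 (n : ℕ) (hn : 3 ≤ n) (c : ℕ → ℝ)
    (hpos : ∀ j ≤ n - 2, 0 < c j)
    (hmono : ∀ j, 1 ≤ j → 2 * j ≤ n - 2 → c (j - 1) ≤ c j)
    (hsym : ∀ j, 2 * j ≤ n - 2 → c j = c (n - 2 - j)) :
    ∀ x ≤ n - 3,
      (∑ j ∈ Finset.range (n - 1 - (x + 1)), c j * c (j + (x + 1))) ≤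
        ∑ j ∈ Finset.range (n - 1 - x), c j * c (j + x) := by
  intro x hx
  set m := n - 2 with hm
  have hxm : x + 1 ≤ m := by omega
  -- full symmetry
  have hsym' : ∀ k, k ≤ m → c k = c (m - k) := by
    intro k hk
    rcases le_or_gt (2 * k) m with h | h
    · exact hsym k h
    · have h2 : c (m - k) = c (m - (m - k)) := hsym (m - k) (by omega)
      have h3 : m - (m - k) = k := by omega
      rw [h3] at h2
      exact h2.symm
  -- chain monotonicity
  have hmono' : ∀ a b, a ≤ b → 2 * b ≤ m → c a ≤ c b := by
    intro a b
    induction b with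
    | zero =>
      intro hab _
      interval_cases a
      exact le_rfl
    | succ b ih =>
      intro hab hb
      rcases Nat.lt_or_ge a (b + 1) with h | h
      · have step : c b ≤ c (b + 1) := by
          have := hmono (b + 1) (by omega) (by omega)
          simpa using this
        exact le_trans (ih (by omega) (by omega)) step
      · have hab' : a = b + 1 := by omega
        rw [hab']
  -- unimodal comparison
  have hmono2 : ∀ a b, a ≤ b → a + b ≤ m → c a ≤ c b := by
    intro a b hab h
    rcases le_or_gt (2 * b) m with hb | hb
    · exact hmono' a b hab hb
    · rw [hsym' b (by omega)]
      exact hmono' a (m - b) (by omega) (by omega)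
  have e1 : n - 1 - (x + 1) = m - x := by omega
  have e2 : n - 1 - x = (m - x) + 1 := by omega
  rw [e1, e2, Finset.sum_range_succ']
  set L := m - x with hL
  -- termwise nonnegativity in the monotone regime
  have hterm : ∀ j, 2 * (j + 1) ≤ m → j + x + 1 ≤ m →
      0 ≤ (c (j + 1) - c j) * c (j + x + 1) := by
    intro j h1 h2
    have hc : c j ≤ c (j + 1) := by
      have := hmono (j + 1) (by omega) h1
      simpa using this
    have hp := hpos (j + x + 1) h2
    nlinarith
  -- nonnegativity of a symmetric pair
  have pairA : ∀ j, x ≤ j → j < L → 2 * j + 2 ≤ m →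
      0 ≤ (c (j + 1) - c j) * c (j + x + 1)
        + (c (m - 1 - j + 1) - c (m - 1 - j)) * c (m - 1 - j + x + 1) := by
    intro j hjx hjL hj2
    have r1 : m - 1 - j + 1 = m - j := by omega
    have r2 : m - 1 - j + x + 1 = m - (j - x) := by omega
    have r3 : c (m - j) = c j := (hsym' j (by omega)).symm
    have r4 : c (m - 1 - j) = c (j + 1) := by
      have h := hsym' (j + 1) (by omega)
      have h5 : m - (j + 1) = m - 1 - j := by omega
      rw [h5] at h
      exact h.symm
    have r5 : c (m - (j - x)) = c (j - x) := (hsym' (j - x) (by omega)).symm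
    rw [r1, r2, r3, r4, r5]
    have hc1 : c j ≤ c (j + 1) := by
      have := hmono (j + 1) (by omega) (by omega)
      simpa using this
    have hc2 : c (j - x) ≤ c (j + x + 1) := hmono2 (j - x) (j + x + 1) (by omega) (by omega)
    nlinarith [mul_nonneg (sub_nonneg.mpr hc1) (sub_nonneg.mpr hc2)]
  have pair : ∀ j, x ≤ j → j < L →
      0 ≤ (c (j + 1) - c j) * c (j + x + 1)
        + (c (m - 1 - j + 1) - c (m - 1 - j)) * c (m - 1 - j + x + 1) := by
    intro j hjx hjL
    rcases Nat.lt_or_ge (2 * j + 2) (m + 1) with h | h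
    · exact pairA j hjx hjL (by omega)
    · rcases Nat.eq_or_lt_of_le h with heq | hlt
      · -- middle term: 2j + 1 = m
        have hj : m - 1 - j = j := by omega
        have hcc : c (j + 1) = c j := by
          have h0 := hsym' j (by omega)
          have h5 : m - j = j + 1 := by omega
          rw [h5] at h0
          exact h0.symm
        rw [hj, hcc]
        simp
      · -- m ≤ 2j : apply pairA to the reflected index
        have hk := pairA (m - 1 - j) (by omega) (by omega) (by omega)
        have h6 : m - 1 - (m - 1 - j) = j := by omega
        rw [h6] at hk
        linarith
  have key : 0 ≤ ∑ j ∈ Finset.range L, (c (j + 1) - c j) * c (j + x + 1) := by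
    rcases le_or_gt (2 * L) m with hcase | hcase
    · apply Finset.sum_nonneg
      intro j hj
      have hj' : j < L := Finset.mem_range.mp hj
      exact hterm j (by omega) (by omega)
    · have hxL : x ≤ L := by omega
      obtain ⟨d, hd⟩ : ∃ d, L = x + d := ⟨L - x, by omega⟩
      rw [hd, Finset.sum_range_add]
      have h1 : 0 ≤ ∑ j ∈ Finset.range x, (c (j + 1) - c j) * c (j + x + 1) := by
        apply Finset.sum_nonneg
        intro j hj
        have hj' : j < x := Finset.mem_range.mp hj
        exact hterm j (by omega) (by omega)
      have hsum2 : 0 ≤ ∑ k ∈ Finset.range d,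
          ((c (x + k + 1) - c (x + k)) * c (x + k + x + 1)
            + (c (x + (d - 1 - k) + 1) - c (x + (d - 1 - k))) * c (x + (d - 1 - k) + x + 1)) := by
        apply Finset.sum_nonneg
        intro k hk
        have hk' : k < d := Finset.mem_range.mp hk
        have hidx : x + (d - 1 - k) = m - 1 - (x + k) := by omega
        rw [hidx]
        exact pair (x + k) (by omega) (by omega)
      rw [Finset.sum_add_distrib] at hsum2
      have hrefl := Finset.sum_range_reflect
        (fun k => (c (x + k + 1) - c (x + k)) * c (x + k + x + 1)) d
      linarith [hsum2, hrefl, h1]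
  have expand : ∑ j ∈ Finset.range L, c (j + 1) * c (j + 1 + x)
      = (∑ j ∈ Finset.range L, c j * c (j + (x + 1)))
        + ∑ j ∈ Finset.range L, (c (j + 1) - c j) * c (j + x + 1) := by
    rw [← Finset.sum_add_distrib]
    refine Finset.sum_congr rfl fun j _ => ?_
    have h1 : j + 1 + x = j + x + 1 := by omega
    have h2 : j + (x + 1) = j + x + 1 := by omega
    rw [h1, h2]; ring
  have hcx : 0 ≤ c 0 * c (0 + x) :=
    le_of_lt (mul_pos (hpos 0 (by omega)) (hpos (0 + x) (by omega)))
  linarith [key, hcx, expand]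
end

section
/- Let n ≥ 4 and φ_n = (1/3)(n-1)(n-2)(n-3). Then with x = √6, the quantity G(n) = (2n³ + 6φ_n)/(2n³(n-1) + √6 n^{3/2} φ_n) satisfies G(n) ≤ 2√6 · n^{-3/2}. -/
/-- With `x = √6`, the local gap threshold
`G(n) = (2n³ + 6φ_n)/(2n³(n-1) + √6 n^{3/2} φ_n)` satisfies `G(n) ≤ 2√6 n^{-3/2}`. -/
theorem stmt_9 (n : ℕ) (hn : 4 ≤ n) :
    let φ : ℝ := ((n : ℝ) - 1) * ((n : ℝ) - 2) * ((n : ℝ) - 3) / 3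
    (2 * (n : ℝ) ^ 3 + 6 * φ) /
        (2 * (n : ℝ) ^ 3 * ((n : ℝ) - 1) + Real.sqrt 6 * (n : ℝ) ^ ((3 : ℝ) / 2) * φ)
      ≤ 2 * Real.sqrt 6 * (n : ℝ) ^ (-(3 : ℝ) / 2) := by
  intro φ
  have hn4 : (4 : ℝ) ≤ (n : ℝ) := by exact_mod_cast hn
  have hn0 : (0 : ℝ) ≤ (n : ℝ) := by linarith
  set s : ℝ := Real.sqrt 6 with hs
  set u : ℝ := Real.sqrt n with hu
  have hs2 : s ^ 2 = 6 := Real.sq_sqrt (by norm_num)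
  have hu2 : u ^ 2 = (n : ℝ) := Real.sq_sqrt hn0
  have h42 : Real.sqrt 4 = 2 := by
    rw [show (4:ℝ) = 2^2 by norm_num, Real.sqrt_sq (by norm_num)]
  have hsge : (2 : ℝ) ≤ s := by
    rw [← h42]; exact Real.sqrt_le_sqrt (by norm_num)
  have huge : (2 : ℝ) ≤ u := by
    rw [← h42]; exact Real.sqrt_le_sqrt hn4
  have hu0 : (0:ℝ) < u := by linarith
  have hu4 : (4:ℝ) ≤ u ^ 2 := by nlinarith
  have ht : (n : ℝ) ^ ((3 : ℝ) / 2) = u ^ 3 := by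
    rw [hu, Real.sqrt_eq_rpow, ← Real.rpow_natCast ((n:ℝ) ^ ((1:ℝ)/2)) 3,
      ← Real.rpow_mul hn0]
    norm_num
  have htn : (n : ℝ) ^ (-(3 : ℝ) / 2) = (u ^ 3)⁻¹ := by
    rw [show (-(3:ℝ)/2) = -((3:ℝ)/2) by ring, Real.rpow_neg hn0, ht]
  have hφ : φ = (u^2 - 1) * (u^2 - 2) * (u^2 - 3) / 3 := by rw [hu2]
  have hφ0 : (0:ℝ) ≤ φ := by
    rw [hφ]
    apply div_nonneg _ (by norm_num)
    apply mul_nonneg (mul_nonneg (by linarith) (by linarith)) (by linarith)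
  have hD : 0 < 2 * (n : ℝ) ^ 3 * ((n : ℝ) - 1) + s * (n : ℝ) ^ ((3 : ℝ) / 2) * φ := by
    have hn3 : 0 < (n:ℝ)^3 := by positivity
    have h1 : 0 < 2 * (n : ℝ) ^ 3 * ((n : ℝ) - 1) := by nlinarith
    have h2 : 0 ≤ s * (n : ℝ) ^ ((3 : ℝ) / 2) * φ :=
      mul_nonneg (mul_nonneg (by linarith) (Real.rpow_nonneg hn0 _)) hφ0
    linarith
  rw [htn, ht, hφ, ← hu2]
  rw [ht, hφ, ← hu2] at hD
  rw [show 2 * s * (u ^ 3)⁻¹ = (2 * s) / u ^ 3 by ring,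
    div_le_div_iff₀ hD (by positivity)]
  have expand : 2 * s * (2 * (u^2) ^ 3 * (u^2 - 1)
        + s * u^3 * ((u^2 - 1) * (u^2 - 2) * (u^2 - 3) / 3))
      = 4 * s * u^6 * (u^2 - 1)
        + 4 * u^3 * ((u^2 - 1) * (u^2 - 2) * (u^2 - 3)) := by
    linear_combination (2 * u^3 * ((u^2 - 1) * (u^2 - 2) * (u^2 - 3)) / 3) * hs2
  rw [expand]
  have h3 : (0:ℝ) ≤ 2*u^3 := by positivity
  have key1 : 2*u^3*(6*u^4 - 11*u^2 + 6) ≤ 2*u^3*(6*u^2*(u^2-1)) :=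
    mul_le_mul_of_nonneg_left (by linarith) h3
  have hsu : (4:ℝ) ≤ s * u := by
    calc (4:ℝ) = 2*2 := by norm_num
    _ ≤ s * u := mul_le_mul hsge huge (by norm_num) (by linarith)
  have key2 : 2*u^3*(6*u^2*(u^2-1)) ≤ 4*s*u^6*(u^2-1) := by
    have hA : (0:ℝ) ≤ u^5 := by positivity
    have hB : (0:ℝ) ≤ u^2 - 1 := by linarith
    have hC : (0:ℝ) ≤ s*u - 3 := by linarith
    nlinarith [mul_nonneg (mul_nonneg hA hB) hC]
  nlinarith [key1, key2]
end

section
/- Let n ≥ 4, b_n = 6n³/((n-1)(n-2)(n-3)), and x_n = -b_n(n-1)/n^{3/2} + sqrt(b_n²(n-1)²/n³ + b_n). Then 0 < x_n ≤ √6. -/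
private lemma key_aux (nr s b c r6 : ℝ) (hn4 : 4 ≤ nr) (hs2 : s ^ 2 = nr) (hs_ge : 2 ≤ s)
    (hbD : b * ((nr - 1) * (nr - 2) * (nr - 3)) = 6 * nr ^ 3)
    (hcns : c * (nr * s) = b * (nr - 1))
    (h6 : (2.4 : ℝ) ≤ r6) : b ≤ 6 + 2 * r6 * c := by
  have hn0 : 0 < nr := by linarith
  have hs0 : 0 < s := by linarith
  have hs_le : s ≤ nr / 2 := by nlinarith
  have hD : 0 < (nr - 1) * (nr - 2) * (nr - 3) :=
    mul_pos (mul_pos (by linarith) (by linarith)) (by linarith)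
  have hns : 0 < nr * s := mul_pos hn0 hs0
  have hred : s * (6 * nr ^ 2 - 11 * nr + 6) ≤ 2 * r6 * nr ^ 2 * (nr - 1) := by
    have h1 : s * (6 * nr ^ 2 - 11 * nr + 6) ≤ nr / 2 * (6 * nr ^ 2 - 11 * nr + 6) :=
      mul_le_mul_of_nonneg_right hs_le (by nlinarith)
    have h2 : (2.4 : ℝ) * (nr ^ 2 * (nr - 1)) ≤ r6 * (nr ^ 2 * (nr - 1)) :=
      mul_le_mul_of_nonneg_right h6 (by nlinarith)
    nlinarith
  have e1 : b * (((nr - 1) * (nr - 2) * (nr - 3)) * (nr * s)) = 6 * nr ^ 4 * s := by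
    linear_combination (nr * s) * hbD
  have e2 : 2 * r6 * c * (((nr - 1) * (nr - 2) * (nr - 3)) * (nr * s))
      = 2 * r6 * (6 * nr ^ 3 * (nr - 1)) := by
    linear_combination (2 * r6 * ((nr - 1) * (nr - 2) * (nr - 3))) * hcns
      + (2 * r6 * (nr - 1)) * hbD
  have h3 := mul_le_mul_of_nonneg_left hred (show (0:ℝ) ≤ 6 * nr by positivity)
  have hDns : 0 < ((nr - 1) * (nr - 2) * (nr - 3)) * (nr * s) := mul_pos hD hns
  have hfinal : 0 ≤ (6 + 2 * r6 * c - b) * (((nr - 1) * (nr - 2) * (nr - 3)) * (nr * s)) := by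
    nlinarith [e1, e2, h3]
  nlinarith [hfinal, hDns]

/-- For `n ≥ 4`, with `b_n = 6n³/((n-1)(n-2)(n-3))` and
`x_n = -b_n(n-1)/n^{3/2} + √(b_n²(n-1)²/n³ + b_n)`, one has `0 < x_n ≤ √6`. -/
theorem stmt_18 (n : ℕ) (hn : 4 ≤ n) :
    let b : ℝ := 6 * (n : ℝ) ^ 3 / (((n : ℝ) - 1) * ((n : ℝ) - 2) * ((n : ℝ) - 3))
    let x : ℝ := -b * ((n : ℝ) - 1) / (n : ℝ) ^ ((3 : ℝ) / 2) +
      Real.sqrt (b ^ 2 * ((n : ℝ) - 1) ^ 2 / (n : ℝ) ^ 3 + b)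
    0 < x ∧ x ≤ Real.sqrt 6 := by
  intro b x
  have hn4 : (4:ℝ) ≤ (n:ℝ) := by exact_mod_cast hn
  have hn0 : (0:ℝ) < (n:ℝ) := by linarith
  have hD : (0:ℝ) < ((n:ℝ) - 1) * ((n:ℝ) - 2) * ((n:ℝ) - 3) :=
    mul_pos (mul_pos (by linarith) (by linarith)) (by linarith)
  have hb : 0 < b := div_pos (by positivity) hD
  have hbD : b * (((n:ℝ) - 1) * ((n:ℝ) - 2) * ((n:ℝ) - 3)) = 6 * (n:ℝ)^3 :=
    div_mul_cancel₀ _ hD.ne'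
  set s : ℝ := Real.sqrt n with hs_def
  have hs2 : s ^ 2 = (n:ℝ) := Real.sq_sqrt (le_of_lt hn0)
  have hs_ge : (2:ℝ) ≤ s := by
    have : Real.sqrt 4 ≤ s := Real.sqrt_le_sqrt hn4
    rwa [show (4:ℝ) = 2^2 by norm_num, Real.sqrt_sq (by norm_num)] at this
  have hs0 : 0 < s := by linarith
  have hns : (0:ℝ) < (n:ℝ) * s := mul_pos hn0 hs0
  have hpow : (n:ℝ) ^ ((3:ℝ)/2) = (n:ℝ) * s := by
    rw [show (3:ℝ)/2 = 1 + 1/2 by norm_num, Real.rpow_add hn0, Real.rpow_one,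
      hs_def, Real.sqrt_eq_rpow]
  set c : ℝ := b * ((n:ℝ) - 1) / ((n:ℝ) * s) with hc_def
  have hc : 0 < c := div_pos (by nlinarith) hns
  have hcns : c * ((n:ℝ) * s) = b * ((n:ℝ) - 1) := div_mul_cancel₀ _ hns.ne'
  have hc2 : c ^ 2 = b ^ 2 * ((n:ℝ) - 1) ^ 2 / (n:ℝ) ^ 3 := by
    rw [hc_def, div_pow, mul_pow, mul_pow, hs2]
    ring
  have hx : x = -c + Real.sqrt (c ^ 2 + b) := by
    show -b * ((n : ℝ) - 1) / (n : ℝ) ^ ((3 : ℝ) / 2) + _ = _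
    rw [hpow, hc2, hc_def]
    ring_nf
  set r : ℝ := Real.sqrt (c ^ 2 + b) with hr_def
  have hr0 : 0 ≤ r := Real.sqrt_nonneg _
  have hr2 : r ^ 2 = c ^ 2 + b := Real.sq_sqrt (by positivity)
  clear_value b x s c r
  have h6 : (2.4:ℝ) ≤ Real.sqrt 6 := by
    nlinarith [Real.sq_sqrt (show (0:ℝ) ≤ 6 by norm_num), Real.sqrt_nonneg 6]
  have h60 : (0:ℝ) ≤ Real.sqrt 6 := Real.sqrt_nonneg 6
  have h6sq : Real.sqrt 6 ^ 2 = 6 := Real.sq_sqrt (by norm_num)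
  have key : b ≤ 6 + 2 * Real.sqrt 6 * c :=
    key_aux (n:ℝ) s b c (Real.sqrt 6) hn4 hs2 hs_ge hbD hcns h6
  constructor
  · rw [hx]
    nlinarith [sq_nonneg (r - c)]
  · rw [hx]
    have hle : r ≤ Real.sqrt ((Real.sqrt 6 + c) ^ 2) := by
      rw [hr_def]
      apply Real.sqrt_le_sqrt
      nlinarith
    rw [Real.sqrt_sq (by positivity)] at hle
    linarith
end
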